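/- arXiv:2408.05071 — 2 statements merged into one kernel-verified Lean document; each statement's English description precedes it below -/
import Mathlib

section
/- Let $(X_t)_{t\in\mathbb{Z}}$ be a stationary, mean-zero Hilbert-space-valued process satisfying $\mathbb{E}\|\sum_{i=1}^n X_i\|^2 = O(n)$, and suppose a change-point model $Y_i = X_i + n^{-r}\mu\mathbf{1}\{i > k^*\}$ holds with $r > 0$ and $k^* = \lfloor nt^*\rfloor$, $t^* \in (0,1)$. Then the sample covariance operators satisfy $\mathbb{E}\|\hat C_{0,Y} - \hat C_{0,X}\|_{HS}^2 = O(n^{-\min\{4r,\,1+2r\}})$, where $\hat C_{0,Z} = n^{-1}\sum_{i=1}^n (Z_i - \bar Z)\otimes(Z_i - \bar Z)$. -/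
open MeasureTheory Finset RealInnerProductSpace

set_option maxHeartbeats 1000000 in
/-- Covariance perturbation under local alternatives (Lemma 5 of the paper).
`X` is a stationary mean-zero Hilbert-space-valued process with
`𝔼‖∑_{i=1}^n X_i‖² = O(n)`, and `Y_i = X_i + n^{−r} μ 𝟙{i > k*}` with
`k* = ⌊n t*⌋`.  The space `E` models the Hilbert–Schmidt operators on `H`,
with `tens a b` the rank-one tensor `a ⊗ b`
(so `⟪a⊗b, c⊗d⟫_{HS} = ⟪a,c⟫⟪b,d⟫`), and `CX n, CY n` are the sample
covariance operators of `X₁,…,X_n` resp. `Y₁,…,Y_n`.  Then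
`𝔼‖Ĉ_{0,Y} − Ĉ_{0,X}‖²_{HS} = O(n^{−min{4r, 1+2r}})`. -/
theorem sample_covariance_perturbation
    {Ω : Type*} [MeasurableSpace Ω] (P : Measure Ω) [IsProbabilityMeasure P]
    {H : Type*} [NormedAddCommGroup H] [InnerProductSpace ℝ H] [CompleteSpace H]
    [MeasurableSpace H] [BorelSpace H]
    {E : Type*} [NormedAddCommGroup E] [InnerProductSpace ℝ E]
    (tens : H →ₗ[ℝ] H →ₗ[ℝ] E)
    (htens : ∀ a b c d : H, ⟪tens a b, tens c d⟫ = ⟪a, c⟫ * ⟪b, d⟫)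
    (X : ℕ → Ω → H)
    (hXmeas : ∀ i, Measurable (X i))
    (hXL2 : ∀ i, MemLp (X i) 2 P)
    (hXmean : ∀ i, (∫ ω, X i ω ∂P) = 0)
    (Cmom : ℝ)
    (hmom : ∀ n : ℕ, 1 ≤ n →
      (∫ ω, ‖∑ i ∈ Finset.Icc 1 n, X i ω‖ ^ 2 ∂P) ≤ Cmom * n)
    (ts : ℝ) (hts : ts ∈ Set.Ioo (0 : ℝ) 1) (r : ℝ) (hr : 0 < r) (μvec : H)
    (Y : ℕ → ℕ → Ω → H)
    (hY : ∀ n i ω, Y n i ω = X i ω +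
      (if Nat.floor ((n : ℝ) * ts) < i then ((n : ℝ) ^ (-r)) • μvec else 0))
    (CX CY : ℕ → Ω → E)
    (hCX : ∀ n ω, CX n ω = ((n : ℝ)⁻¹) • ∑ i ∈ Finset.Icc 1 n,
      tens (X i ω - ((n : ℝ)⁻¹) • ∑ j ∈ Finset.Icc 1 n, X j ω)
           (X i ω - ((n : ℝ)⁻¹) • ∑ j ∈ Finset.Icc 1 n, X j ω))
    (hCY : ∀ n ω, CY n ω = ((n : ℝ)⁻¹) • ∑ i ∈ Finset.Icc 1 n,
      tens (Y n i ω - ((n : ℝ)⁻¹) • ∑ j ∈ Finset.Icc 1 n, Y n j ω)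
           (Y n i ω - ((n : ℝ)⁻¹) • ∑ j ∈ Finset.Icc 1 n, Y n j ω)) :
    ∃ C : ℝ, ∀ n : ℕ, 1 ≤ n →
      (∫ ω, ‖CY n ω - CX n ω‖ ^ 2 ∂P) ≤
        C * (n : ℝ) ^ (-(min (4 * r) (1 + 2 * r))) := by
  classical
  -- the tensor has multiplicative norm
  have hnorm : ∀ a b : H, ‖tens a b‖ = ‖a‖ * ‖b‖ := by
    intro a b
    have h2 : ‖tens a b‖ ^ 2 = (‖a‖ * ‖b‖) ^ 2 := by
      calc ‖tens a b‖ ^ 2 = ⟪tens a b, tens a b⟫ := (real_inner_self_eq_norm_sq _).symm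
        _ = ⟪a, a⟫ * ⟪b, b⟫ := htens a b a b
        _ = (‖a‖ * ‖b‖) ^ 2 := by
            rw [real_inner_self_eq_norm_sq, real_inner_self_eq_norm_sq]; ring
    have := Real.sqrt_sq (norm_nonneg (tens a b))
    rw [← this, h2, Real.sqrt_sq (mul_nonneg (norm_nonneg a) (norm_nonneg b))]
  have hCnn : 0 ≤ Cmom := by
    have h1 := hmom 1 le_rfl
    have h0 : 0 ≤ ∫ ω, ‖∑ i ∈ Finset.Icc 1 1, X i ω‖ ^ 2 ∂P :=
      integral_nonneg fun ω => by positivity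
    simpa using h0.trans h1
  refine ⟨80 * Cmom * ‖μvec‖ ^ 2 + 2 * ‖μvec‖ ^ 4, ?_⟩
  intro n hn
  have hnpos : (0 : ℝ) < n := by exact_mod_cast hn
  have hn1 : (1 : ℝ) ≤ (n : ℝ) := by exact_mod_cast hn
  set k := Nat.floor ((n : ℝ) * ts) with hkdef
  have hkn : k ≤ n := by
    have : (n : ℝ) * ts ≤ (n : ℝ) := by nlinarith [hts.2, hts.1]
    calc k ≤ Nat.floor ((n : ℝ)) := Nat.floor_mono this
      _ = n := Nat.floor_natCast n
  set δ : H := ((n : ℝ) ^ (-r)) • μvec with hδdef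
  set p : ℝ := ((n - k : ℕ) : ℝ) / n with hpdef
  have hp0 : 0 ≤ p := by positivity
  have hp1 : p ≤ 1 := by
    rw [hpdef, div_le_one hnpos]
    exact_mod_cast Nat.sub_le n k
  set c : ℕ → ℝ := fun i => (if k < i then (1 : ℝ) else 0) - p with hcdef
  have hcabs : ∀ i, |c i| ≤ 1 := by
    intro i
    rw [hcdef]; dsimp only
    split_ifs <;> rw [abs_le] <;> constructor <;> linarith
  set S : ℕ → Ω → H := fun m ω => ∑ i ∈ Finset.Icc 1 m, X i ω with hSdef
  set u : Ω → H := fun ω => (n : ℝ)⁻¹ • ∑ i ∈ Finset.Icc 1 n, c i • X i ω with hudef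
  set q : ℝ := (n : ℝ)⁻¹ * ∑ i ∈ Finset.Icc 1 n, c i * c i with hqdef
  -- bounds on q
  have hq0 : 0 ≤ q := by
    rw [hqdef]
    apply mul_nonneg (by positivity)
    exact Finset.sum_nonneg fun i _ => mul_self_nonneg _
  have hq1 : q ≤ 1 := by
    rw [hqdef]
    have hsum : ∑ i ∈ Finset.Icc 1 n, c i * c i ≤ (n : ℝ) := by
      calc ∑ i ∈ Finset.Icc 1 n, c i * c i ≤ ∑ _i ∈ Finset.Icc 1 n, (1 : ℝ) := by
            apply Finset.sum_le_sum
            intro i _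
            have := hcabs i
            nlinarith [abs_nonneg (c i), sq_abs (c i)]
        _ = (n : ℝ) := by simp [Nat.card_Icc]
    calc (n : ℝ)⁻¹ * ∑ i ∈ Finset.Icc 1 n, c i * c i ≤ (n : ℝ)⁻¹ * (n : ℝ) := by
          apply mul_le_mul_of_nonneg_left hsum (by positivity)
      _ = 1 := inv_mul_cancel₀ (ne_of_gt hnpos)
  -- basic sums
  have hsum_e : ∑ i ∈ Finset.Icc 1 n, (if k < i then (1 : ℝ) else 0) = ((n - k : ℕ) : ℝ) := by
    rw [Finset.sum_boole]
    congr 1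
    have : Finset.filter (fun i => k < i) (Finset.Icc 1 n) = Finset.Ioc k n := by
      ext i; simp only [Finset.mem_filter, Finset.mem_Icc, Finset.mem_Ioc]; omega
    rw [this, Nat.card_Ioc]
  have hsum_c : ∑ i ∈ Finset.Icc 1 n, c i = 0 := by
    rw [hcdef]
    rw [Finset.sum_sub_distrib, hsum_e, Finset.sum_const, Nat.card_Icc]
    simp only [nsmul_eq_mul, hpdef]
    field_simp
    simp
  -- Y in terms of X
  have hY' : ∀ i ω, Y n i ω = X i ω + (if k < i then (1 : ℝ) else 0) • δ := by
    intro i ω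
    rw [hY n i ω, ← hkdef, hδdef]
    split_ifs <;> simp
  have hYsum : ∀ ω, ∑ j ∈ Finset.Icc 1 n, Y n j ω
      = (∑ j ∈ Finset.Icc 1 n, X j ω) + ((n - k : ℕ) : ℝ) • δ := by
    intro ω
    simp only [hY']
    rw [Finset.sum_add_distrib, ← Finset.sum_smul, hsum_e]
  have hresid : ∀ i ω, Y n i ω - (n : ℝ)⁻¹ • ∑ j ∈ Finset.Icc 1 n, Y n j ω
      = (X i ω - (n : ℝ)⁻¹ • ∑ j ∈ Finset.Icc 1 n, X j ω) + c i • δ := by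
    intro i ω
    rw [hY' i ω, hYsum ω, smul_add]
    have hps : (n : ℝ)⁻¹ • (((n - k : ℕ) : ℝ) • δ) = p • δ := by
      rw [smul_smul, hpdef]; congr 1; field_simp
    rw [hps, hcdef]
    dsimp only
    rw [sub_smul]
    abel
  -- the tensor expansion
  have htensi : ∀ (a : H) (t : ℝ),
      tens (a + t • δ) (a + t • δ)
        = tens a a + (t • tens a δ + t • tens δ a + (t * t) • tens δ δ) := by
    intro a t
    simp only [_root_.map_add, _root_.map_smul, LinearMap.add_apply, LinearMap.smul_apply, smul_smul]
    module
  -- key decomposition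
  have hD : ∀ ω, CY n ω - CX n ω = tens (u ω) δ + tens δ (u ω) + q • tens δ δ := by
    intro ω
    rw [hCY n ω, hCX n ω]
    have h1 : ∀ i ∈ Finset.Icc 1 n,
        tens (Y n i ω - (n : ℝ)⁻¹ • ∑ j ∈ Finset.Icc 1 n, Y n j ω)
             (Y n i ω - (n : ℝ)⁻¹ • ∑ j ∈ Finset.Icc 1 n, Y n j ω)
        = tens (X i ω - (n : ℝ)⁻¹ • ∑ j ∈ Finset.Icc 1 n, X j ω)
               (X i ω - (n : ℝ)⁻¹ • ∑ j ∈ Finset.Icc 1 n, X j ω)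
          + (c i • tens (X i ω - (n : ℝ)⁻¹ • ∑ j ∈ Finset.Icc 1 n, X j ω) δ
             + c i • tens δ (X i ω - (n : ℝ)⁻¹ • ∑ j ∈ Finset.Icc 1 n, X j ω)
             + (c i * c i) • tens δ δ) := by
      intro i _
      rw [hresid i ω]
      exact htensi _ _
    rw [Finset.sum_congr rfl h1, Finset.sum_add_distrib, smul_add, add_sub_cancel_left]
    -- now reduce the remaining sum
    have hw : ∑ i ∈ Finset.Icc 1 n,
        (c i • tens (X i ω - (n : ℝ)⁻¹ • ∑ j ∈ Finset.Icc 1 n, X j ω) δ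
          + c i • tens δ (X i ω - (n : ℝ)⁻¹ • ∑ j ∈ Finset.Icc 1 n, X j ω)
          + (c i * c i) • tens δ δ)
        = tens (∑ i ∈ Finset.Icc 1 n, c i • X i ω) δ
          + tens δ (∑ i ∈ Finset.Icc 1 n, c i • X i ω)
          + (∑ i ∈ Finset.Icc 1 n, c i * c i) • tens δ δ := by
      have hwu : ∑ i ∈ Finset.Icc 1 n,
          c i • (X i ω - (n : ℝ)⁻¹ • ∑ j ∈ Finset.Icc 1 n, X j ω)
          = ∑ i ∈ Finset.Icc 1 n, c i • X i ω := by
        simp only [smul_sub]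
        rw [Finset.sum_sub_distrib, ← Finset.sum_smul, hsum_c, zero_smul, sub_zero]
      rw [Finset.sum_add_distrib, Finset.sum_add_distrib, ← Finset.sum_smul]
      congr 1
      congr 1
      · rw [← hwu]
        simp only [_root_.map_sum, LinearMap.sum_apply, _root_.map_smul, LinearMap.smul_apply]
      · rw [← hwu]
        simp only [_root_.map_sum, _root_.map_smul]
    rw [hw]
    rw [hudef, hqdef]
    dsimp only
    simp only [smul_add, _root_.map_smul, LinearMap.smul_apply, smul_smul]
  -- pointwise norm bound
  have hDb : ∀ ω, ‖CY n ω - CX n ω‖ ^ 2 ≤ 8 * ‖δ‖ ^ 2 * ‖u ω‖ ^ 2 + 2 * ‖δ‖ ^ 4 := by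
    intro ω
    have hb : ‖CY n ω - CX n ω‖ ≤ 2 * ‖u ω‖ * ‖δ‖ + ‖δ‖ ^ 2 := by
      rw [hD ω]
      calc ‖tens (u ω) δ + tens δ (u ω) + q • tens δ δ‖
          ≤ ‖tens (u ω) δ + tens δ (u ω)‖ + ‖q • tens δ δ‖ := norm_add_le _ _
        _ ≤ ‖tens (u ω) δ‖ + ‖tens δ (u ω)‖ + ‖q • tens δ δ‖ := by
            gcongr; exact norm_add_le _ _
        _ = ‖u ω‖ * ‖δ‖ + ‖δ‖ * ‖u ω‖ + |q| * (‖δ‖ * ‖δ‖) := by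
            simp only [hnorm, norm_smul, Real.norm_eq_abs]
        _ ≤ 2 * ‖u ω‖ * ‖δ‖ + ‖δ‖ ^ 2 := by
            have h1 : |q| ≤ 1 := abs_le.2 ⟨by linarith, hq1⟩
            nlinarith [norm_nonneg δ, norm_nonneg (u ω), mul_nonneg (norm_nonneg δ) (norm_nonneg δ)]
    have h0 : 0 ≤ ‖CY n ω - CX n ω‖ := norm_nonneg _
    nlinarith [sq_nonneg (2 * ‖u ω‖ * ‖δ‖ - ‖δ‖ ^ 2), norm_nonneg (u ω), norm_nonneg δ,
      sq_nonneg (‖u ω‖ * ‖δ‖)]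
  -- integrability facts
  have hSmem : ∀ m, MemLp (S m) 2 P := by
    intro m
    have h := memLp_finset_sum' (Finset.Icc 1 m) (fun i (_ : i ∈ Finset.Icc 1 m) => hXL2 i)
    have he : (∑ i ∈ Finset.Icc 1 m, X i) = S m := by
      funext ω; rw [hSdef]; simp
    rwa [he] at h
  have hS2int : ∀ m, Integrable (fun ω => ‖S m ω‖ ^ 2) P := fun m => (hSmem m).norm.integrable_sq
  have humem : MemLp u 2 P := by
    have h := (memLp_finset_sum' (Finset.Icc 1 n)
      (fun i (_ : i ∈ Finset.Icc 1 n) => (hXL2 i).const_smul (c i))).const_smul ((n : ℝ)⁻¹)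
    have he : ((n : ℝ)⁻¹ • ∑ i ∈ Finset.Icc 1 n, c i • X i) = u := by
      funext ω; rw [hudef]; simp
    rwa [he] at h
  have hu2int : Integrable (fun ω => ‖u ω‖ ^ 2) P := humem.norm.integrable_sq
  -- moment bound for partial sums
  have hmomS : ∀ m, m ≤ n → (∫ ω, ‖S m ω‖ ^ 2 ∂P) ≤ Cmom * m := by
    intro m _
    rcases Nat.eq_zero_or_pos m with hm | hm
    · subst hm
      simp [hSdef]
    · exact hmom m hm
  have hfilter_eq : Finset.filter (fun i => k < i) (Finset.Icc 1 n) = Finset.Ioc k n := by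
    ext i; simp only [Finset.mem_filter, Finset.mem_Icc, Finset.mem_Ioc]; omega
  have hIoc : ∀ m : ℕ, Finset.Icc 1 m = Finset.Ioc 0 m := by
    intro m; ext i; simp only [Finset.mem_Icc, Finset.mem_Ioc]; omega
  have hsplitS : ∀ ω, ∑ i ∈ Finset.Ioc k n, X i ω = S n ω - S k ω := by
    intro ω
    have h := Finset.sum_Ioc_consecutive (fun i => X i ω) (Nat.zero_le k) hkn
    rw [hSdef]
    dsimp only
    rw [hIoc n, hIoc k, ← h]
    abel
  -- pointwise bound on ‖u‖²
  have hu_pt : ∀ ω, ‖u ω‖ ^ 2 ≤ ((n : ℝ)⁻¹) ^ 2 * (2 * ‖S k ω‖ ^ 2 + 8 * ‖S n ω‖ ^ 2) := by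
    intro ω
    have hwsum : ∑ i ∈ Finset.Icc 1 n, c i • X i ω = (S n ω - S k ω) - p • S n ω := by
      rw [hcdef]
      dsimp only
      simp only [sub_smul]
      rw [Finset.sum_sub_distrib, ← Finset.smul_sum]
      congr 1
      · have hstep : ∀ i, (if k < i then (1 : ℝ) else 0) • X i ω
            = if k < i then X i ω else 0 := by
          intro i; split_ifs <;> simp
        simp only [hstep]
        rw [← Finset.sum_filter, hfilter_eq, hsplitS]
    have hwn : ‖∑ i ∈ Finset.Icc 1 n, c i • X i ω‖ ≤ ‖S k ω‖ + 2 * ‖S n ω‖ := by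
      rw [hwsum]
      calc ‖(S n ω - S k ω) - p • S n ω‖
          ≤ ‖S n ω - S k ω‖ + ‖p • S n ω‖ := norm_sub_le _ _
        _ ≤ (‖S n ω‖ + ‖S k ω‖) + p * ‖S n ω‖ := by
            rw [norm_smul, Real.norm_eq_abs, abs_of_nonneg hp0]
            gcongr
            exact norm_sub_le _ _
        _ ≤ ‖S k ω‖ + 2 * ‖S n ω‖ := by nlinarith [norm_nonneg (S n ω)]
    have huω : ‖u ω‖ = (n : ℝ)⁻¹ * ‖∑ i ∈ Finset.Icc 1 n, c i • X i ω‖ := by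
      rw [hudef]
      dsimp only
      rw [norm_smul, Real.norm_eq_abs, abs_of_pos (by positivity)]
    rw [huω]
    have h1 : (0:ℝ) ≤ (n : ℝ)⁻¹ := by positivity
    nlinarith [hwn, norm_nonneg (∑ i ∈ Finset.Icc 1 n, c i • X i ω), norm_nonneg (S k ω),
      norm_nonneg (S n ω), sq_nonneg (‖S k ω‖ - 2 * ‖S n ω‖),
      mul_le_mul hwn hwn (norm_nonneg _) (by positivity : (0:ℝ) ≤ ‖S k ω‖ + 2 * ‖S n ω‖),
      sq_nonneg ((n : ℝ)⁻¹)]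
  -- integral bounds
  have hstep1 : (∫ ω, ‖CY n ω - CX n ω‖ ^ 2 ∂P)
      ≤ ∫ ω, (8 * ‖δ‖ ^ 2 * ‖u ω‖ ^ 2 + 2 * ‖δ‖ ^ 4) ∂P := by
    refine integral_mono_of_nonneg (Filter.Eventually.of_forall fun ω => by positivity)
      ((hu2int.const_mul _).add (integrable_const _)) (Filter.Eventually.of_forall hDb)
  have hstep2 : (∫ ω, (8 * ‖δ‖ ^ 2 * ‖u ω‖ ^ 2 + 2 * ‖δ‖ ^ 4) ∂P)
      = 8 * ‖δ‖ ^ 2 * (∫ ω, ‖u ω‖ ^ 2 ∂P) + 2 * ‖δ‖ ^ 4 := by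
    rw [integral_add (hu2int.const_mul _) (integrable_const _), integral_const_mul]
    simp [measure_univ]
  have hstep3 : (∫ ω, ‖u ω‖ ^ 2 ∂P) ≤ 10 * Cmom * (n : ℝ)⁻¹ := by
    have h1 : (∫ ω, ‖u ω‖ ^ 2 ∂P)
        ≤ ∫ ω, ((n : ℝ)⁻¹) ^ 2 * (2 * ‖S k ω‖ ^ 2 + 8 * ‖S n ω‖ ^ 2) ∂P :=
      integral_mono hu2int
        ((((hS2int k).const_mul 2).add ((hS2int n).const_mul 8)).const_mul _) hu_pt
    have h2 : (∫ ω, ((n : ℝ)⁻¹) ^ 2 * (2 * ‖S k ω‖ ^ 2 + 8 * ‖S n ω‖ ^ 2) ∂P)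
        = ((n : ℝ)⁻¹) ^ 2 * (2 * (∫ ω, ‖S k ω‖ ^ 2 ∂P) + 8 * (∫ ω, ‖S n ω‖ ^ 2 ∂P)) := by
      rw [integral_const_mul, integral_add ((hS2int k).const_mul 2) ((hS2int n).const_mul 8),
        integral_const_mul, integral_const_mul]
    have hk' := hmomS k hkn
    have hn' := hmomS n le_rfl
    have hkr : (k : ℝ) ≤ (n : ℝ) := by exact_mod_cast hkn
    refine h1.trans ?_
    rw [h2]
    have h3 : ((n : ℝ)⁻¹) ^ 2 * (2 * (∫ ω, ‖S k ω‖ ^ 2 ∂P) + 8 * (∫ ω, ‖S n ω‖ ^ 2 ∂P))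
        ≤ ((n : ℝ)⁻¹) ^ 2 * (10 * Cmom * (n : ℝ)) := by
      apply mul_le_mul_of_nonneg_left _ (by positivity)
      nlinarith [hk', hn', hCnn, hkr]
    refine h3.trans (le_of_eq ?_)
    field_simp
  -- put everything together
  have hδn : ‖δ‖ = (n : ℝ) ^ (-r) * ‖μvec‖ := by
    rw [hδdef, norm_smul, Real.norm_eq_abs, abs_of_pos (Real.rpow_pos_of_pos hnpos _)]
  have hδ0 : 0 ≤ ‖δ‖ := norm_nonneg _
  set M : ℝ := (n : ℝ) ^ (-(min (4 * r) (1 + 2 * r))) with hMdef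
  have hM0 : 0 ≤ M := Real.rpow_nonneg hnpos.le _
  have e1 : ((n : ℝ) ^ (-r)) ^ 2 * (n : ℝ)⁻¹ = (n : ℝ) ^ (-(1 + 2 * r)) := by
    rw [← Real.rpow_natCast ((n : ℝ) ^ (-r)) 2, ← Real.rpow_mul hnpos.le,
      ← Real.rpow_neg_one (n : ℝ), ← Real.rpow_add hnpos]
    congr 1
    push_cast
    ring
  have e2 : ((n : ℝ) ^ (-r)) ^ 4 = (n : ℝ) ^ (-(4 * r)) := by
    rw [← Real.rpow_natCast ((n : ℝ) ^ (-r)) 4, ← Real.rpow_mul hnpos.le]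
    congr 1
    push_cast
    ring
  have le1 : (n : ℝ) ^ (-(1 + 2 * r)) ≤ M := by
    apply Real.rpow_le_rpow_of_exponent_le hn1
    have := min_le_right (4 * r) (1 + 2 * r)
    linarith
  have le2 : (n : ℝ) ^ (-(4 * r)) ≤ M := by
    apply Real.rpow_le_rpow_of_exponent_le hn1
    have := min_le_left (4 * r) (1 + 2 * r)
    linarith
  calc (∫ ω, ‖CY n ω - CX n ω‖ ^ 2 ∂P)
      ≤ 8 * ‖δ‖ ^ 2 * (∫ ω, ‖u ω‖ ^ 2 ∂P) + 2 * ‖δ‖ ^ 4 := hstep1.trans (le_of_eq hstep2)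
    _ ≤ 8 * ‖δ‖ ^ 2 * (10 * Cmom * (n : ℝ)⁻¹) + 2 * ‖δ‖ ^ 4 := by
        have := mul_le_mul_of_nonneg_left hstep3 (by positivity : (0:ℝ) ≤ 8 * ‖δ‖ ^ 2)
        linarith
    _ = 80 * Cmom * ‖μvec‖ ^ 2 * (((n : ℝ) ^ (-r)) ^ 2 * (n : ℝ)⁻¹)
          + 2 * ‖μvec‖ ^ 4 * ((n : ℝ) ^ (-r)) ^ 4 := by
        rw [hδn]; ring
    _ = 80 * Cmom * ‖μvec‖ ^ 2 * (n : ℝ) ^ (-(1 + 2 * r))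
          + 2 * ‖μvec‖ ^ 4 * (n : ℝ) ^ (-(4 * r)) := by rw [e1, e2]
    _ ≤ (80 * Cmom * ‖μvec‖ ^ 2 + 2 * ‖μvec‖ ^ 4) * M := by
        nlinarith [le1, le2, hCnn, hM0, sq_nonneg ‖μvec‖, norm_nonneg μvec,
          mul_nonneg hCnn (sq_nonneg ‖μvec‖), pow_nonneg (norm_nonneg μvec) 4,
          Real.rpow_nonneg hnpos.le (-(1 + 2 * r)), Real.rpow_nonneg hnpos.le (-(4 * r))]
end

section
/- Let $\xi_{l,s}$, $l \in \mathbb{N}$, $s \in \mathbb{Z}$, be real-valued random variables with autocovariances $\gamma_{l_1,l_2}(h) = \operatorname{Cov}(\xi_{l_1,0},\xi_{l_2,h})$ and summable fourth-order cumulants. For an orthonormal system $(v_l)$ in a Hilbert space and $m \ge 0$, the fourth moment bound holds: $\frac{1}{n^2}\mathbb{E}\big\|\sum_{s=a+1}^{a+n}\sum_{l=m+1}^\infty \xi_{l,s} v_l\big\|^4 \le \big(\sum_{l=m+1}^\infty\sum_{h\in\mathbb{Z}}|\gamma_l(h)|\big)^2 + 2\sum_{l_1,l_2=m+1}^\infty\big(\sum_{h\in\mathbb{Z}}|\gamma_{l_1,l_2}(h)|\big)^2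 + \frac{C}{n}$, where $\gamma_l = \gamma_{l,l}$ and $C = \sum_{l_1,l_2=m+1}^\infty\sum_{s_1,s_2,s_3\in\mathbb{Z}}|cum(\xi_{l_1,0},\xi_{l_1,s_1},\xi_{l_2,s_2},\xi_{l_2,s_3})|$. -/
open MeasureTheory Finset

open scoped ENNReal NNReal

set_option linter.unusedSectionVars false

section auxlemmas

section aux
variable {Ω : Type*} [MeasurableSpace Ω] {P : Measure Ω} {ι : Type*} [Countable ι]

lemma aux_tsum_ofReal_toReal {G : ι → ℝ} (h0 : ∀ i, 0 ≤ G i) :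
    ∑' i, G i = (∑' i, ENNReal.ofReal (G i)).toReal := by
  by_cases hs : Summable G
  · rw [← ENNReal.ofReal_tsum_of_nonneg h0 hs, ENNReal.toReal_ofReal (tsum_nonneg h0)]
  · rw [tsum_eq_zero_of_not_summable hs]
    have : ∑' i, ENNReal.ofReal (G i) = ⊤ := by
      by_contra hne
      exact hs (by simpa [fun i => ENNReal.toReal_ofReal (h0 i)] using
        ENNReal.summable_toReal hne)
    simp [this]

lemma aux_lintegral_tsum_eq {G : ι → Ω → ℝ} (hmeas : ∀ i, AEStronglyMeasurable (G i) P)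
    (h0 : ∀ i ω, 0 ≤ G i ω) (hint : ∀ i, Integrable (G i) P)
    (hs : Summable fun i => ∫ ω, G i ω ∂P) :
    ∫⁻ ω, ∑' i, ENNReal.ofReal (G i ω) ∂P = ENNReal.ofReal (∑' i, ∫ ω, G i ω ∂P) := by
  rw [lintegral_tsum fun i => (hmeas i).aemeasurable.ennreal_ofReal]
  rw [ENNReal.ofReal_tsum_of_nonneg (fun i => integral_nonneg (h0 i)) hs]
  congr 1
  ext i
  rw [← ofReal_integral_eq_lintegral_ofReal (hint i) (Filter.Eventually.of_forall (h0 i))]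

lemma aux_ae_summable {G : ι → Ω → ℝ} (hmeas : ∀ i, AEStronglyMeasurable (G i) P)
    (h0 : ∀ i ω, 0 ≤ G i ω) (hint : ∀ i, Integrable (G i) P)
    (hs : Summable fun i => ∫ ω, G i ω ∂P) :
    ∀ᵐ ω ∂P, Summable fun i => G i ω := by
  have hfin := aux_lintegral_tsum_eq hmeas h0 hint hs
  have hae : ∀ᵐ ω ∂P, ∑' i, ENNReal.ofReal (G i ω) < ⊤ := by
    refine ae_lt_top' (AEMeasurable.ennreal_tsum fun i => (hmeas i).aemeasurable.ennreal_ofReal)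
      (by rw [hfin]; exact ENNReal.ofReal_ne_top)
  filter_upwards [hae] with ω hω
  have := ENNReal.summable_toReal hω.ne
  simpa [fun i => ENNReal.toReal_ofReal (h0 i ω)] using this

lemma aux_integral_tsum_eq {G : ι → Ω → ℝ} (hmeas : ∀ i, AEStronglyMeasurable (G i) P)
    (h0 : ∀ i ω, 0 ≤ G i ω) (hint : ∀ i, Integrable (G i) P)
    (hs : Summable fun i => ∫ ω, G i ω ∂P) :
    ∫ ω, (∑' i, G i ω) ∂P = ∑' i, ∫ ω, G i ω ∂P := by
  have hpt : ∀ ω, (∑' i, G i ω) = (∑' i, ENNReal.ofReal (G i ω)).toReal := fun ω =>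
    aux_tsum_ofReal_toReal (fun i => h0 i ω)
  have hmeas' : AEMeasurable (fun ω => ∑' i, ENNReal.ofReal (G i ω)) P :=
    AEMeasurable.ennreal_tsum fun i => (hmeas i).aemeasurable.ennreal_ofReal
  have hfin := aux_lintegral_tsum_eq hmeas h0 hint hs
  have hae : ∀ᵐ ω ∂P, ∑' i, ENNReal.ofReal (G i ω) < ⊤ :=
    ae_lt_top' hmeas' (by rw [hfin]; exact ENNReal.ofReal_ne_top)
  calc ∫ ω, (∑' i, G i ω) ∂P
      = ∫ ω, (∑' i, ENNReal.ofReal (G i ω)).toReal ∂P := by simp_rw [hpt]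
    _ = (∫⁻ ω, ∑' i, ENNReal.ofReal (G i ω) ∂P).toReal := integral_toReal hmeas' hae
    _ = ∑' i, ∫ ω, G i ω ∂P := by
        rw [hfin, ENNReal.toReal_ofReal (tsum_nonneg fun i => integral_nonneg (h0 i))]

end aux

section orth
variable {H : Type*} [NormedAddCommGroup H] [InnerProductSpace ℝ H]
  {ι : Type*} {v : ι → H}

lemma aux_summable_smul [CompleteSpace H] (hv : Orthonormal ℝ v) {a : ι → ℝ}
    (ha : Summable fun i => a i ^ 2) : Summable fun i => a i • v i := by
  have h := (hv.orthogonalFamily.summable_iff_norm_sq_summable a).2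
  simp only [LinearIsometry.toSpanSingleton_apply] at h
  exact h (by simpa [Real.norm_eq_abs, sq_abs] using ha)

lemma aux_hasSum_sq_norm (hv : Orthonormal ℝ v) {a : ι → ℝ} {x : H}
    (hx : HasSum (fun i => a i • v i) x) : HasSum (fun i => a i ^ 2) (‖x‖ ^ 2) := by
  have hcont : Continuous fun y : H => ‖y‖ ^ 2 := by continuity
  have ht := (hcont.tendsto x).comp hx
  have heq : ∀ s : Finset ι, ‖∑ i ∈ s, a i • v i‖ ^ 2 = ∑ i ∈ s, a i ^ 2 := by
    intro s
    have := hv.orthogonalFamily.norm_sum a s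
    simp only [LinearIsometry.toSpanSingleton_apply, Real.norm_eq_abs, sq_abs] at this
    exact this
  unfold HasSum
  convert ht using 2 with s
  exact (heq s).symm

end orth

section lp
variable {Ω : Type*} [MeasurableSpace Ω] {P : Measure Ω} [IsProbabilityMeasure P]

lemma aux_mul_memℒp2 {f g : Ω → ℝ} (hf : MemLp f 4 P) (hg : MemLp g 4 P) :
    MemLp (fun ω => f ω * g ω) 2 P := by
  have h4 : (4:ℝ≥0∞)⁻¹ + 4⁻¹ = 2⁻¹ := by
    rw [← two_mul, show (4:ℝ≥0∞) = 2*2 from by norm_num,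
      ENNReal.mul_inv (Or.inl two_ne_zero) (Or.inl ENNReal.ofNat_ne_top), ← mul_assoc,
      ENNReal.mul_inv_cancel two_ne_zero ENNReal.ofNat_ne_top, one_mul]
  haveI : ENNReal.HolderTriple 4 4 2 := ⟨h4⟩
  have h := hg.smul hf (p := 4) (q := 4) (r := 2)
  simpa [Pi.smul_apply, smul_eq_mul, Pi.mul_def] using h

lemma aux_mul_integrable {f g : Ω → ℝ} (hf : MemLp f 2 P) (hg : MemLp g 2 P) :
    Integrable (fun ω => f ω * g ω) P := by
  have h2 : (2:ℝ≥0∞)⁻¹ + 2⁻¹ = 1 := ENNReal.inv_two_add_inv_two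
  haveI : ENNReal.HolderTriple 2 2 1 := ⟨by rw [h2, inv_one]⟩
  have h := hg.smul hf (p := 2) (q := 2) (r := 1)
  exact memLp_one_iff_integrable.mp (by simpa [Pi.smul_apply, smul_eq_mul, Pi.mul_def] using h)

end lp

lemma aux_shift_abs_sum (I : Finset ℤ) (f : ℤ → ℝ) (hf : Summable fun h => |f h|) (s1 : ℤ) :
    ∑ s2 ∈ I, |f (s2 - s1)| ≤ ∑' h, |f h| := by
  have : ∑ s2 ∈ I, |f (s2 - s1)| = ∑ h ∈ I.image (fun s2 => s2 - s1), |f h| :=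
    (Finset.sum_image (g := fun s2 => s2 - s1) (f := fun h => |f h|)
      (by intro x _ y _ h; dsimp only at h; omega)).symm
  rw [this]
  exact Summable.sum_le_tsum _ (fun _ _ => abs_nonneg _) hf

lemma aux_double_shift (I : Finset ℤ) (f : ℤ → ℝ) (hf : Summable fun h => |f h|) :
    ∑ s1 ∈ I, ∑ s2 ∈ I, |f (s2 - s1)| ≤ I.card * ∑' h, |f h| := by
  calc ∑ s1 ∈ I, ∑ s2 ∈ I, |f (s2 - s1)| ≤ ∑ _s1 ∈ I, ∑' h, |f h| :=
        Finset.sum_le_sum fun s1 _ => aux_shift_abs_sum I f hf s1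
    _ = I.card * ∑' h, |f h| := by rw [Finset.sum_const, nsmul_eq_mul]

lemma aux_double_shift' (I : Finset ℤ) (f : ℤ → ℝ) (hf : Summable fun h => |f h|) :
    |∑ s1 ∈ I, ∑ s2 ∈ I, f (s2 - s1)| ≤ I.card * ∑' h, |f h| := by
  refine le_trans (Finset.abs_sum_le_sum_abs _ _) ?_
  refine le_trans (Finset.sum_le_sum fun s1 _ => Finset.abs_sum_le_sum_abs _ _) ?_
  exact aux_double_shift I f hf

lemma aux_triple_shift (I : Finset ℤ) (g : ℤ × ℤ × ℤ → ℝ) (hg : Summable fun u => |g u|)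
    (s1 : ℤ) :
    ∑ s2 ∈ I, ∑ s3 ∈ I, ∑ s4 ∈ I, |g (s2 - s1, s3 - s1, s4 - s1)| ≤ ∑' u, |g u| := by
  have h1 : ∑ s2 ∈ I, ∑ s3 ∈ I, ∑ s4 ∈ I, |g (s2 - s1, s3 - s1, s4 - s1)| =
      ∑ x ∈ I ×ˢ (I ×ˢ I), |g (x.1 - s1, x.2.1 - s1, x.2.2 - s1)| := by
    rw [Finset.sum_product]
    exact Finset.sum_congr rfl fun s2 _ => by rw [Finset.sum_product]
  have h2 : ∑ x ∈ I ×ˢ (I ×ˢ I), |g (x.1 - s1, x.2.1 - s1, x.2.2 - s1)| =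
      ∑ u ∈ (I ×ˢ (I ×ˢ I)).image
        (fun x : ℤ × ℤ × ℤ => (x.1 - s1, x.2.1 - s1, x.2.2 - s1)), |g u| :=
    (Finset.sum_image (g := fun x : ℤ × ℤ × ℤ => (x.1 - s1, x.2.1 - s1, x.2.2 - s1))
      (f := fun u => |g u|) (by
      rintro ⟨x1, x2, x3⟩ _ ⟨y1, y2, y3⟩ _ h
      simp only [Prod.mk.injEq] at h ⊢
      omega)).symm
  rw [h1, h2]
  exact Summable.sum_le_tsum _ (fun _ _ => abs_nonneg _) hg

lemma aux_quad_factor12 (I : Finset ℤ) (f g : ℤ → ℤ → ℝ) :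
    ∑ s1 ∈ I, ∑ s2 ∈ I, ∑ s3 ∈ I, ∑ s4 ∈ I, f s1 s2 * g s3 s4 =
      (∑ s1 ∈ I, ∑ s2 ∈ I, f s1 s2) * (∑ s3 ∈ I, ∑ s4 ∈ I, g s3 s4) := by
  simp only [← Finset.mul_sum, ← Finset.sum_mul]

lemma aux_quad_factor13 (I : Finset ℤ) (f g : ℤ → ℤ → ℝ) :
    ∑ s1 ∈ I, ∑ s2 ∈ I, ∑ s3 ∈ I, ∑ s4 ∈ I, f s1 s3 * g s2 s4 =
      (∑ s1 ∈ I, ∑ s3 ∈ I, f s1 s3) * (∑ s2 ∈ I, ∑ s4 ∈ I, g s2 s4) := by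
  simp only [← Finset.mul_sum, ← Finset.sum_mul]

lemma aux_quad_factor14 (I : Finset ℤ) (f g : ℤ → ℤ → ℝ) :
    ∑ s1 ∈ I, ∑ s2 ∈ I, ∑ s3 ∈ I, ∑ s4 ∈ I, f s1 s4 * g s2 s3 =
      (∑ s1 ∈ I, ∑ s4 ∈ I, f s1 s4) * (∑ s2 ∈ I, ∑ s3 ∈ I, g s2 s3) := by
  simp only [← Finset.mul_sum, ← Finset.sum_mul]

lemma aux_sq_mul_sq (I : Finset ℤ) (f g : ℤ → ℝ) :
    (∑ s ∈ I, f s) ^ 2 * (∑ s ∈ I, g s) ^ 2 =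
      ∑ s1 ∈ I, ∑ s2 ∈ I, ∑ s3 ∈ I, ∑ s4 ∈ I, f s1 * f s2 * g s3 * g s4 := by
  simp only [← Finset.mul_sum, ← Finset.sum_mul]
  ring
end auxlemmas


set_option maxHeartbeats 8000000

/-- Fourth-moment bound for Hilbert-space partial sums of score processes.
`ξ l s` are real mean-zero random variables, stationary with cross-covariances
`γ l₁ l₂ h = Cov(ξ_{l₁,0}, ξ_{l₂,h})` and (stationary) fourth-order cumulants
`cum l₁ l₂ s₁ s₂ s₃ = cum(ξ_{l₁,0}, ξ_{l₁,s₁}, ξ_{l₂,s₂}, ξ_{l₂,s₃})`, and `(v l)`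
is an orthonormal system in a Hilbert space.  Then
`n⁻²𝔼‖∑_{s=a+1}^{a+n} ∑_{l>m} ξ_{l,s} v_l‖⁴
  ≤ (∑_{l>m} ∑_h |γ_l(h)|)² + 2 ∑_{l₁,l₂>m} (∑_h |γ_{l₁,l₂}(h)|)² + C/n`. -/
theorem fourth_moment_bound_tail_scores
    {Ω : Type*} [MeasurableSpace Ω] (P : Measure Ω) [IsProbabilityMeasure P]
    {H : Type*} [NormedAddCommGroup H] [InnerProductSpace ℝ H] [CompleteSpace H]
    (v : ℕ → H) (hv : Orthonormal ℝ v)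
    (ξ : ℕ → ℤ → Ω → ℝ)
    (hmean : ∀ l s, (∫ ω, ξ l s ω ∂P) = 0)
    (hL4 : ∀ l s, MemLp (ξ l s) 4 P)
    (γ : ℕ → ℕ → ℤ → ℝ)
    (hγ : ∀ l₁ l₂ (s h : ℤ), (∫ ω, ξ l₁ s ω * ξ l₂ (s + h) ω ∂P) = γ l₁ l₂ h)
    (cum : ℕ → ℕ → ℤ → ℤ → ℤ → ℝ)
    (hcum : ∀ l₁ l₂ (t s₁ s₂ s₃ : ℤ), cum l₁ l₂ s₁ s₂ s₃ =
      (∫ ω, ξ l₁ t ω * ξ l₁ (t + s₁) ω * ξ l₂ (t + s₂) ω * ξ l₂ (t + s₃) ω ∂P)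
        - γ l₁ l₁ s₁ * γ l₂ l₂ (s₃ - s₂)
        - γ l₁ l₂ s₂ * γ l₁ l₂ (s₃ - s₁)
        - γ l₁ l₂ s₃ * γ l₁ l₂ (s₂ - s₁))
    (m : ℕ)
    -- summability of covariances and fourth-order cumulants over the tail indices
    (hsum1 : Summable fun p : {l : ℕ // m < l} × ℤ => |γ p.1 p.1 p.2|)
    (hsum2 : ∀ l₁ l₂ : ℕ, Summable fun h : ℤ => |γ l₁ l₂ h|)
    (hsum3 : Summable fun q : {l : ℕ // m < l} × {l : ℕ // m < l} =>
      (∑' h : ℤ, |γ q.1.1 q.2.1 h|) ^ 2)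
    (hsum4 : Summable fun q : ({l : ℕ // m < l} × {l : ℕ // m < l}) × (ℤ × ℤ × ℤ) =>
      |cum q.1.1.1 q.1.2.1 q.2.1 q.2.2.1 q.2.2.2|)
    (C : ℝ)
    (hC : C = ∑' q : ({l : ℕ // m < l} × {l : ℕ // m < l}) × (ℤ × ℤ × ℤ),
      |cum q.1.1.1 q.1.2.1 q.2.1 q.2.2.1 q.2.2.2|)
    (a : ℤ) (n : ℕ) (hn : 1 ≤ n) :
    (1 / (n : ℝ) ^ 2) *
        (∫ ω, ‖∑ s ∈ Finset.Icc (a + 1) (a + n),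
          ∑' l : {l : ℕ // m < l}, ξ l.1 s ω • v l.1‖ ^ 4 ∂P) ≤
      (∑' l : {l : ℕ // m < l}, ∑' h : ℤ, |γ l.1 l.1 h|) ^ 2 +
        2 * (∑' q : {l : ℕ // m < l} × {l : ℕ // m < l},
          (∑' h : ℤ, |γ q.1.1 q.2.1 h|) ^ 2) +
        C / n := by
  classical
  have hn0 : (n : ℝ) ≠ 0 := Nat.cast_ne_zero.mpr (by omega)
  set I : Finset ℤ := Finset.Icc (a + 1) (a + n) with hI
  have hcard : I.card = n := by rw [hI, Int.card_Icc]; omega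
  have hmeasξ : ∀ (l : ℕ) (s : ℤ), AEStronglyMeasurable (ξ l s) P := fun l s => (hL4 l s).1
  set c : {l : ℕ // m < l} → Ω → ℝ := fun l ω => ∑ s ∈ I, ξ l.1 s ω with hc
  have hcL4 : ∀ l, MemLp (c l) 4 P := fun l => memLp_finsetSum I (fun s _ => hL4 l.1 s)
  have hc2 : ∀ l, MemLp (fun ω => (c l ω) ^ 2) 2 P := fun l => by
    simpa [sq] using aux_mul_memℒp2 (hcL4 l) (hcL4 l)
  have hFint : ∀ p : {l : ℕ // m < l} × {l : ℕ // m < l},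
      Integrable (fun ω => (c p.1 ω) ^ 2 * (c p.2 ω) ^ 2) P :=
    fun p => aux_mul_integrable (hc2 p.1) (hc2 p.2)
  have hFmeas : ∀ p : {l : ℕ // m < l} × {l : ℕ // m < l},
      AEStronglyMeasurable (fun ω => (c p.1 ω) ^ 2 * (c p.2 ω) ^ 2) P :=
    fun p => (hFint p).1
  have hF0 : ∀ (p : {l : ℕ // m < l} × {l : ℕ // m < l}) (ω : Ω),
      0 ≤ (c p.1 ω) ^ 2 * (c p.2 ω) ^ 2 :=
    fun p ω => mul_nonneg (sq_nonneg _) (sq_nonneg _)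
  have hEE : ∀ (l1 l2 : ℕ) (s1 s2 : ℤ),
      (∫ ω, ξ l1 s1 ω * ξ l2 s2 ω ∂P) = γ l1 l2 (s2 - s1) := by
    intro l1 l2 s1 s2
    have h := hγ l1 l2 s1 (s2 - s1)
    rwa [show s1 + (s2 - s1) = s2 by ring] at h
  have hint4 : ∀ (l1 l2 : ℕ) (s1 s2 s3 s4 : ℤ),
      Integrable (fun ω => ξ l1 s1 ω * ξ l1 s2 ω * ξ l2 s3 ω * ξ l2 s4 ω) P := by
    intro l1 l2 s1 s2 s3 s4
    have h := aux_mul_integrable (aux_mul_memℒp2 (hL4 l1 s1) (hL4 l1 s2))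
      (aux_mul_memℒp2 (hL4 l2 s3) (hL4 l2 s4))
    simpa [mul_assoc] using h
  have hE4 : ∀ (l1 l2 : ℕ) (s1 s2 s3 s4 : ℤ),
      (∫ ω, ξ l1 s1 ω * ξ l1 s2 ω * ξ l2 s3 ω * ξ l2 s4 ω ∂P) =
        cum l1 l2 (s2 - s1) (s3 - s1) (s4 - s1)
          + γ l1 l1 (s2 - s1) * γ l2 l2 (s4 - s3)
          + γ l1 l2 (s3 - s1) * γ l1 l2 (s4 - s2)
          + γ l1 l2 (s4 - s1) * γ l1 l2 (s3 - s2) := by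
    intro l1 l2 s1 s2 s3 s4
    have h := hcum l1 l2 s1 (s2 - s1) (s3 - s1) (s4 - s1)
    rw [show s1 + (s2 - s1) = s2 by ring, show s1 + (s3 - s1) = s3 by ring,
      show s1 + (s4 - s1) = s4 by ring, show s4 - s1 - (s3 - s1) = s4 - s3 by ring,
      show s4 - s1 - (s2 - s1) = s4 - s2 by ring,
      show s3 - s1 - (s2 - s1) = s3 - s2 by ring] at h
    linarith
  have hΓ0 : ∀ l1 l2 : ℕ, 0 ≤ ∑' h, |γ l1 l2 h| := fun l1 l2 => tsum_nonneg fun _ => abs_nonneg _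
  have hsumΓ : Summable (fun l : {l : ℕ // m < l} => ∑' h, |γ l.1 l.1 h|) :=
    ((summable_prod_of_nonneg (fun _ => abs_nonneg _)).mp hsum1).2
  have hsumK : Summable (fun p : {l : ℕ // m < l} × {l : ℕ // m < l} =>
      ∑' u : ℤ × ℤ × ℤ, |cum p.1.1 p.2.1 u.1 u.2.1 u.2.2|) :=
    ((summable_prod_of_nonneg (fun _ => abs_nonneg _)).mp hsum4).2
  have hcumsum : ∀ p : {l : ℕ // m < l} × {l : ℕ // m < l},
      Summable (fun u : ℤ × ℤ × ℤ => |cum p.1.1 p.2.1 u.1 u.2.1 u.2.2|) :=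
    fun p => ((summable_prod_of_nonneg (fun _ => abs_nonneg _)).mp hsum4).1 p
  -- the per-pair moment bound
  have hMest : ∀ p : {l : ℕ // m < l} × {l : ℕ // m < l},
      (∫ ω, (c p.1 ω) ^ 2 * (c p.2 ω) ^ 2 ∂P) ≤
        (n : ℝ) ^ 2 * ((∑' h, |γ p.1.1 p.1.1 h|) * (∑' h, |γ p.2.1 p.2.1 h|))
          + 2 * ((n : ℝ) ^ 2 * (∑' h, |γ p.1.1 p.2.1 h|) ^ 2)
          + (n : ℝ) * ∑' u : ℤ × ℤ × ℤ, |cum p.1.1 p.2.1 u.1 u.2.1 u.2.2| := by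
    rintro ⟨l1, l2⟩
    have hswap : (∫ ω, (c l1 ω) ^ 2 * (c l2 ω) ^ 2 ∂P) =
        ∑ s1 ∈ I, ∑ s2 ∈ I, ∑ s3 ∈ I, ∑ s4 ∈ I,
          ∫ ω, ξ l1.1 s1 ω * ξ l1.1 s2 ω * ξ l2.1 s3 ω * ξ l2.1 s4 ω ∂P := by
      have hpt : (fun ω => (c l1 ω) ^ 2 * (c l2 ω) ^ 2) = fun ω =>
          ∑ s1 ∈ I, ∑ s2 ∈ I, ∑ s3 ∈ I, ∑ s4 ∈ I,
            ξ l1.1 s1 ω * ξ l1.1 s2 ω * ξ l2.1 s3 ω * ξ l2.1 s4 ω := by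
        funext ω
        simp only [hc]
        exact aux_sq_mul_sq I (fun s => ξ l1.1 s ω) (fun s => ξ l2.1 s ω)
      rw [hpt]
      rw [integral_finset_sum _ (fun s1 _ => integrable_finset_sum _ (fun s2 _ =>
        integrable_finset_sum _ (fun s3 _ => integrable_finset_sum _ (fun s4 _ =>
          hint4 _ _ _ _ _ _))))]
      refine Finset.sum_congr rfl fun s1 _ => ?_
      rw [integral_finset_sum _ (fun s2 _ => integrable_finset_sum _ (fun s3 _ =>
        integrable_finset_sum _ (fun s4 _ => hint4 _ _ _ _ _ _)))]
      refine Finset.sum_congr rfl fun s2 _ => ?_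
      rw [integral_finset_sum _ (fun s3 _ => integrable_finset_sum _ (fun s4 _ =>
        hint4 _ _ _ _ _ _))]
      refine Finset.sum_congr rfl fun s3 _ => ?_
      rw [integral_finset_sum _ (fun s4 _ => hint4 _ _ _ _ _ _)]
    rw [hswap]
    simp only [hE4, Finset.sum_add_distrib]
    have hKb : ∑ s1 ∈ I, ∑ s2 ∈ I, ∑ s3 ∈ I, ∑ s4 ∈ I,
        cum l1.1 l2.1 (s2 - s1) (s3 - s1) (s4 - s1) ≤
        (n : ℝ) * ∑' u : ℤ × ℤ × ℤ, |cum l1.1 l2.1 u.1 u.2.1 u.2.2| := by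
      refine le_trans (le_abs_self _) (le_trans (Finset.abs_sum_le_sum_abs _ _) ?_)
      have hin : ∀ s1 ∈ I, |∑ s2 ∈ I, ∑ s3 ∈ I, ∑ s4 ∈ I,
          cum l1.1 l2.1 (s2 - s1) (s3 - s1) (s4 - s1)| ≤
          ∑' u : ℤ × ℤ × ℤ, |cum l1.1 l2.1 u.1 u.2.1 u.2.2| := by
        intro s1 _
        refine le_trans (Finset.abs_sum_le_sum_abs _ _) ?_
        refine le_trans (Finset.sum_le_sum fun s2 _ => Finset.abs_sum_le_sum_abs _ _) ?_
        refine le_trans (Finset.sum_le_sum fun s2 _ => Finset.sum_le_sum fun s3 _ =>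
          Finset.abs_sum_le_sum_abs _ _) ?_
        exact aux_triple_shift I (fun u => cum l1.1 l2.1 u.1 u.2.1 u.2.2) (hcumsum (l1, l2)) s1
      refine le_trans (Finset.sum_le_sum hin) ?_
      rw [Finset.sum_const, nsmul_eq_mul, hcard]
    have hAb : ∑ s1 ∈ I, ∑ s2 ∈ I, ∑ s3 ∈ I, ∑ s4 ∈ I,
        γ l1.1 l1.1 (s2 - s1) * γ l2.1 l2.1 (s4 - s3) ≤
        (n : ℝ) ^ 2 * ((∑' h, |γ l1.1 l1.1 h|) * (∑' h, |γ l2.1 l2.1 h|)) := by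
      rw [aux_quad_factor12 I (fun s1 s2 => γ l1.1 l1.1 (s2 - s1))
        (fun s3 s4 => γ l2.1 l2.1 (s4 - s3))]
      have h1 := aux_double_shift' I (fun h => γ l1.1 l1.1 h) (hsum2 _ _)
      have h2 := aux_double_shift' I (fun h => γ l2.1 l2.1 h) (hsum2 _ _)
      calc (∑ s1 ∈ I, ∑ s2 ∈ I, γ l1.1 l1.1 (s2 - s1)) *
            (∑ s3 ∈ I, ∑ s4 ∈ I, γ l2.1 l2.1 (s4 - s3)) ≤
          |∑ s1 ∈ I, ∑ s2 ∈ I, γ l1.1 l1.1 (s2 - s1)| *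
            |∑ s3 ∈ I, ∑ s4 ∈ I, γ l2.1 l2.1 (s4 - s3)| := by
            rw [← abs_mul]; exact le_abs_self _
        _ ≤ ((I.card : ℝ) * ∑' h, |γ l1.1 l1.1 h|) * ((I.card : ℝ) * ∑' h, |γ l2.1 l2.1 h|) := by
            exact mul_le_mul h1 h2 (abs_nonneg _) (mul_nonneg (by positivity) (hΓ0 _ _))
        _ = (n : ℝ) ^ 2 * ((∑' h, |γ l1.1 l1.1 h|) * (∑' h, |γ l2.1 l2.1 h|)) := by
            rw [hcard]; ring
    have hBb : ∑ s1 ∈ I, ∑ s2 ∈ I, ∑ s3 ∈ I, ∑ s4 ∈ I,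
        γ l1.1 l2.1 (s3 - s1) * γ l1.1 l2.1 (s4 - s2) ≤
        (n : ℝ) ^ 2 * (∑' h, |γ l1.1 l2.1 h|) ^ 2 := by
      rw [aux_quad_factor13 I (fun s1 s3 => γ l1.1 l2.1 (s3 - s1))
        (fun s2 s4 => γ l1.1 l2.1 (s4 - s2))]
      have h1 := aux_double_shift' I (fun h => γ l1.1 l2.1 h) (hsum2 _ _)
      calc (∑ s1 ∈ I, ∑ s3 ∈ I, γ l1.1 l2.1 (s3 - s1)) *
            (∑ s2 ∈ I, ∑ s4 ∈ I, γ l1.1 l2.1 (s4 - s2)) ≤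
          |∑ s1 ∈ I, ∑ s2 ∈ I, γ l1.1 l2.1 (s2 - s1)| *
            |∑ s1 ∈ I, ∑ s2 ∈ I, γ l1.1 l2.1 (s2 - s1)| := by
            rw [← abs_mul]; exact le_abs_self _
        _ ≤ ((I.card : ℝ) * ∑' h, |γ l1.1 l2.1 h|) * ((I.card : ℝ) * ∑' h, |γ l1.1 l2.1 h|) :=
            mul_le_mul h1 h1 (abs_nonneg _) (mul_nonneg (by positivity) (hΓ0 _ _))
        _ = (n : ℝ) ^ 2 * (∑' h, |γ l1.1 l2.1 h|) ^ 2 := by rw [hcard]; ring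
    have hDb : ∑ s1 ∈ I, ∑ s2 ∈ I, ∑ s3 ∈ I, ∑ s4 ∈ I,
        γ l1.1 l2.1 (s4 - s1) * γ l1.1 l2.1 (s3 - s2) ≤
        (n : ℝ) ^ 2 * (∑' h, |γ l1.1 l2.1 h|) ^ 2 := by
      rw [aux_quad_factor14 I (fun s1 s4 => γ l1.1 l2.1 (s4 - s1))
        (fun s2 s3 => γ l1.1 l2.1 (s3 - s2))]
      have h1 := aux_double_shift' I (fun h => γ l1.1 l2.1 h) (hsum2 _ _)
      calc (∑ s1 ∈ I, ∑ s4 ∈ I, γ l1.1 l2.1 (s4 - s1)) *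
            (∑ s2 ∈ I, ∑ s3 ∈ I, γ l1.1 l2.1 (s3 - s2)) ≤
          |∑ s1 ∈ I, ∑ s2 ∈ I, γ l1.1 l2.1 (s2 - s1)| *
            |∑ s1 ∈ I, ∑ s2 ∈ I, γ l1.1 l2.1 (s2 - s1)| := by
            rw [← abs_mul]; exact le_abs_self _
        _ ≤ ((I.card : ℝ) * ∑' h, |γ l1.1 l2.1 h|) * ((I.card : ℝ) * ∑' h, |γ l1.1 l2.1 h|) :=
            mul_le_mul h1 h1 (abs_nonneg _) (mul_nonneg (by positivity) (hΓ0 _ _))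
        _ = (n : ℝ) ^ 2 * (∑' h, |γ l1.1 l2.1 h|) ^ 2 := by rw [hcard]; ring
    linarith

  -- summability of the bounding series and of the integrals
  have hsumR : Summable (fun p : {l : ℕ // m < l} × {l : ℕ // m < l} =>
      (n : ℝ) ^ 2 * ((∑' h, |γ p.1.1 p.1.1 h|) * (∑' h, |γ p.2.1 p.2.1 h|))
        + 2 * ((n : ℝ) ^ 2 * (∑' h, |γ p.1.1 p.2.1 h|) ^ 2)
        + (n : ℝ) * ∑' u : ℤ × ℤ × ℤ, |cum p.1.1 p.2.1 u.1 u.2.1 u.2.2|) := by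
    refine Summable.add (Summable.add ?_ ?_) ?_
    · exact (hsumΓ.mul_of_nonneg hsumΓ (fun _ => hΓ0 _ _) (fun _ => hΓ0 _ _)).mul_left _
    · exact (hsum3.mul_left ((n : ℝ) ^ 2)).mul_left 2
    · exact hsumK.mul_left _
  have hFI0 : ∀ p : {l : ℕ // m < l} × {l : ℕ // m < l},
      0 ≤ ∫ ω, (c p.1 ω) ^ 2 * (c p.2 ω) ^ 2 ∂P :=
    fun p => integral_nonneg (fun ω => hF0 p ω)
  have hsumF : Summable (fun p : {l : ℕ // m < l} × {l : ℕ // m < l} =>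
      ∫ ω, (c p.1 ω) ^ 2 * (c p.2 ω) ^ 2 ∂P) :=
    Summable.of_nonneg_of_le hFI0 hMest hsumR
  -- a.e. summability of the squared scores
  have hsumγ0 : Summable (fun l : {l : ℕ // m < l} => γ l.1 l.1 0) := by
    have h := hsum1.comp_injective (i := fun l : {l : ℕ // m < l} => (l, (0 : ℤ)))
      (fun x y hxy => (Prod.ext_iff.mp hxy).1)
    exact Summable.of_abs (by simpa [Function.comp_def] using h)
  have hae1 : ∀ᵐ ω ∂P, ∀ s : ℤ, Summable fun l : {l : ℕ // m < l} => (ξ l.1 s ω) ^ 2 := by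
    rw [ae_all_iff]
    intro s
    refine aux_ae_summable (fun l => ?_) (fun l ω => sq_nonneg _) (fun l => ?_) ?_
    · simpa [sq, Pi.mul_def] using (hmeasξ l.1 s).mul (hmeasξ l.1 s)
    · exact ((hL4 l.1 s).mono_exponent (by norm_num)).integrable_sq
    · have heq : ∀ l : {l : ℕ // m < l}, (∫ ω, (ξ l.1 s ω) ^ 2 ∂P) = γ l.1 l.1 0 := by
        intro l
        have h := hEE l.1 l.1 s s
        rw [sub_self] at h
        rw [← h]
        congr 1
        funext ω
        rw [sq]
      simp only [heq]
      exact hsumγ0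
  -- the a.e. Parseval identity for the fourth power of the norm
  have haeS : ∀ᵐ ω ∂P, ‖∑ s ∈ I, ∑' l : {l : ℕ // m < l}, ξ l.1 s ω • v l.1‖ ^ 4 =
      ∑' p : {l : ℕ // m < l} × {l : ℕ // m < l}, (c p.1 ω) ^ 2 * (c p.2 ω) ^ 2 := by
    have hvsub : Orthonormal ℝ (fun l : {l : ℕ // m < l} => v l.1) :=
      hv.comp _ Subtype.coe_injective
    filter_upwards [hae1] with ω hω
    have hsmm : ∀ s ∈ I, Summable fun l : {l : ℕ // m < l} => ξ l.1 s ω • v l.1 :=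
      fun s _ => aux_summable_smul hvsub (hω s)
    have hcsmul : ∀ l : {l : ℕ // m < l}, c l ω • v l.1 = ∑ s ∈ I, ξ l.1 s ω • v l.1 := by
      intro l
      simp only [hc]
      exact Finset.sum_smul
    have hsum_c : Summable fun l : {l : ℕ // m < l} => c l ω • v l.1 := by
      simp only [hcsmul]
      exact summable_sum (fun s hs => hsmm s hs)
    have hSx : (∑ s ∈ I, ∑' l : {l : ℕ // m < l}, ξ l.1 s ω • v l.1) =
        ∑' l : {l : ℕ // m < l}, c l ω • v l.1 := by
      rw [← Summable.tsum_finsetSum (fun s hs => hsmm s hs)]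
      exact tsum_congr fun l => (hcsmul l).symm
    have hhs : HasSum (fun l : {l : ℕ // m < l} => (c l ω) ^ 2)
        (‖∑ s ∈ I, ∑' l : {l : ℕ // m < l}, ξ l.1 s ω • v l.1‖ ^ 2) := by
      rw [hSx]
      exact aux_hasSum_sq_norm hvsub hsum_c.hasSum
    have hsq : Summable fun l : {l : ℕ // m < l} => (c l ω) ^ 2 := hhs.summable
    have h2 := hhs.tsum_eq
    calc ‖∑ s ∈ I, ∑' l : {l : ℕ // m < l}, ξ l.1 s ω • v l.1‖ ^ 4
        = (‖∑ s ∈ I, ∑' l : {l : ℕ // m < l}, ξ l.1 s ω • v l.1‖ ^ 2) ^ 2 := by ring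
      _ = (∑' l : {l : ℕ // m < l}, (c l ω) ^ 2) ^ 2 := by rw [h2]
      _ = ∑' p : {l : ℕ // m < l} × {l : ℕ // m < l}, (c p.1 ω) ^ 2 * (c p.2 ω) ^ 2 := by
          rw [sq]
          exact Summable.tsum_mul_tsum hsq hsq
            (hsq.mul_of_nonneg hsq (fun _ => sq_nonneg _) (fun _ => sq_nonneg _))
  -- rewrite the integral
  have hInt : (∫ ω, ‖∑ s ∈ I, ∑' l : {l : ℕ // m < l}, ξ l.1 s ω • v l.1‖ ^ 4 ∂P) =
      ∑' p : {l : ℕ // m < l} × {l : ℕ // m < l}, ∫ ω, (c p.1 ω) ^ 2 * (c p.2 ω) ^ 2 ∂P := by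
    rw [integral_congr_ae haeS]
    exact aux_integral_tsum_eq hFmeas hF0 hFint hsumF
  -- sum up the per-pair bounds
  have hTb : (∑' p : {l : ℕ // m < l} × {l : ℕ // m < l},
        ∫ ω, (c p.1 ω) ^ 2 * (c p.2 ω) ^ 2 ∂P) ≤
      (n : ℝ) ^ 2 * (∑' l : {l : ℕ // m < l}, ∑' h : ℤ, |γ l.1 l.1 h|) ^ 2
        + 2 * ((n : ℝ) ^ 2 * ∑' q : {l : ℕ // m < l} × {l : ℕ // m < l},
            (∑' h : ℤ, |γ q.1.1 q.2.1 h|) ^ 2)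
        + (n : ℝ) * C := by
    refine le_trans (Summable.tsum_le_tsum hMest hsumF hsumR) ?_
    have hS1 : Summable (fun p : {l : ℕ // m < l} × {l : ℕ // m < l} =>
        (n : ℝ) ^ 2 * ((∑' h, |γ p.1.1 p.1.1 h|) * (∑' h, |γ p.2.1 p.2.1 h|))) :=
      (hsumΓ.mul_of_nonneg hsumΓ (fun _ => hΓ0 _ _) (fun _ => hΓ0 _ _)).mul_left _
    have hS2 : Summable (fun p : {l : ℕ // m < l} × {l : ℕ // m < l} =>
        2 * ((n : ℝ) ^ 2 * (∑' h, |γ p.1.1 p.2.1 h|) ^ 2)) :=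
      (hsum3.mul_left ((n : ℝ) ^ 2)).mul_left 2
    have hS3 : Summable (fun p : {l : ℕ // m < l} × {l : ℕ // m < l} =>
        (n : ℝ) * ∑' u : ℤ × ℤ × ℤ, |cum p.1.1 p.2.1 u.1 u.2.1 u.2.2|) :=
      hsumK.mul_left _
    rw [Summable.tsum_add (hS1.add hS2) hS3, Summable.tsum_add hS1 hS2, tsum_mul_left, tsum_mul_left,
      tsum_mul_left, tsum_mul_left]
    have e1 : (∑' p : {l : ℕ // m < l} × {l : ℕ // m < l},
        (∑' h, |γ p.1.1 p.1.1 h|) * (∑' h, |γ p.2.1 p.2.1 h|)) =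
        (∑' l : {l : ℕ // m < l}, ∑' h : ℤ, |γ l.1 l.1 h|) ^ 2 := by
      rw [sq]
      exact (Summable.tsum_mul_tsum hsumΓ hsumΓ
        (hsumΓ.mul_of_nonneg hsumΓ (fun _ => hΓ0 _ _) (fun _ => hΓ0 _ _))).symm
    have e3 : (∑' p : {l : ℕ // m < l} × {l : ℕ // m < l},
        ∑' u : ℤ × ℤ × ℤ, |cum p.1.1 p.2.1 u.1 u.2.1 u.2.2|) = C := by
      rw [hC, Summable.tsum_prod hsum4]
    rw [e1, e3]
  -- final arithmetic
  rw [hInt]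
  have hfrac : 0 ≤ 1 / (n : ℝ) ^ 2 := by positivity
  refine le_trans (mul_le_mul_of_nonneg_left hTb hfrac) (le_of_eq ?_)
  field_simp
end
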